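/- Let n be an odd prime and let a = [a₁,...,a_{n(n-1)}] be the staircase array over Z_n × Z_n (concatenation of the stretches S₁,...,S_{(n-1)/2}). Then for all 0 ≤ i < j ≤ n(n-1), the partial sum a_{i+1} + ... + a_j is nonzero in Z_n × Z_n. Consequently, the walk starting at any vertex v₀ of K_n □ K_n with step array a is a path of length n(n-1). -/

import Mathlib

/-- The Cartesian product `K_n □ K_m` on vertex set `ZMod n × ZMod m`: distinct
vertices are adjacent iff they agree in some coordinate. -/
def rook (n m : ℕ) : SimpleGraph (ZMod n × ZMod m) where
  Adj v w := v ≠ w ∧ (v.1 = w.1 ∨ v.2 = w.2)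
  symm := by
    refine ⟨?_⟩
    rintro v w ⟨h1, h2⟩
    exact ⟨fun h => h1 h.symm, h2.imp Eq.symm Eq.symm⟩
  loopless := by refine ⟨?_⟩; rintro v ⟨h, -⟩; exact h rfl

/-- The translation `(a, b) ↦ (a + t, b)` on `ZMod n × ZMod m`. -/
def shift (n m : ℕ) (t : ZMod n) : ZMod n × ZMod m → ZMod n × ZMod m :=
  fun v => (v.1 + t, v.2)

/-- The translation `shift n m t` as a graph homomorphism of `rook n m`. -/
def shiftHom (n m : ℕ) (t : ZMod n) : rook n m →g rook n m where
  toFun := shift n m t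
  map_rel' := by
    rintro v w ⟨h1, h2⟩
    constructor
    · intro hc
      apply h1
      have ha := congrArg Prod.fst hc
      have hb := congrArg Prod.snd hc
      simp only [shift] at ha hb
      exact Prod.ext (by exact add_right_cancel ha) hb
    · rcases h2 with h | h
      · exact Or.inl (by simp [shift, h])
      · exact Or.inr (by simp [shift, h])

/-- The `g`-th entry (for `1 ≤ g ≤ 2n`) of the stretch `S_k` of the staircase array
over `ZMod n × ZMod n`: `(0, 2k-1)` at odd positions `< 2n`, `(2k-1, 0)` at even
positions `< 2n`, and `(2k, 0)` at position `2n`. -/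
def stretchEntry (n k g : ℕ) : ZMod n × ZMod n :=
  if g = 2 * n then (((2 * k : ℕ) : ZMod n), 0)
  else if g % 2 = 1 then (0, ((2 * k - 1 : ℕ) : ZMod n))
  else (((2 * k - 1 : ℕ) : ZMod n), 0)

/-- The `i`-th entry (for `1 ≤ i ≤ n(n-1)`) of the staircase array over
`ZMod n × ZMod n`: the concatenation of the stretches `S₁, …, S_{(n-1)/2}`. -/
def staircase (n i : ℕ) : ZMod n × ZMod n :=
  stretchEntry n ((i - 1) / (2 * n) + 1) ((i - 1) % (2 * n) + 1)

open Finset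

private lemma zmodCastInj {n a b : ℕ} (ha : a < n) (hb : b < n)
    (h : (a : ZMod n) = b) : a = b := by
  haveI : NeZero n := ⟨by omega⟩
  rw [← ZMod.val_cast_of_lt ha, ← ZMod.val_cast_of_lt hb, h]

private lemma zmodCastNe {n a : ℕ} (h0 : 0 < a) (h : a < n) : (a : ZMod n) ≠ 0 := by
  rw [Ne, ZMod.natCast_eq_zero_iff]
  intro hd; exact absurd (Nat.le_of_dvd h0 hd) (by omega)

private lemma staircase_prefix' (n : ℕ) (hn3 : 3 ≤ n) :
    ∀ i, i ≤ n * (n - 1) →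
    ∑ g ∈ Icc 1 i, staircase n g =
      (((i / (2*n) : ℕ) : ZMod n)
        + ((i % (2*n) / 2 : ℕ) : ZMod n) * ((2 * (i / (2*n)) + 1 : ℕ) : ZMod n),
       (((i % (2*n) + 1) / 2 : ℕ) : ZMod n) * ((2 * (i / (2*n)) + 1 : ℕ) : ZMod n)) := by
  intro i
  induction i with
  | zero => intro _; simp; rfl
  | succ i ih =>
    intro hi
    have h2n : 0 < 2 * n := by omega
    have htlt : i % (2*n) < 2*n := Nat.mod_lt _ h2n
    have hqt : 2*n*(i/(2*n)) + i % (2*n) = i := Nat.div_add_mod i (2*n)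
    have hstep : staircase n (i+1) = stretchEntry n (i/(2*n)+1) (i%(2*n)+1) := by
      simp [staircase]
    rw [Finset.sum_Icc_succ_top (by omega), ih (by omega), hstep]
    rcases eq_or_lt_of_le (Nat.succ_le_of_lt htlt) with he | hlt
    · -- i % (2n) + 1 = 2n
      have hi1 : i + 1 = 2*n*(i/(2*n)+1) := by
        have h2 : 2*n*(i/(2*n)+1) = 2*n*(i/(2*n)) + 2*n := by ring
        omega
      have hd1 : (i+1)/(2*n) = i/(2*n)+1 := by
        rw [hi1, Nat.mul_div_cancel_left _ h2n]
      have hm1 : (i+1) % (2*n) = 0 := by rw [hi1, Nat.mul_mod_right]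
      have e1 : i % (2*n) / 2 = n - 1 := by omega
      have e2 : (i % (2*n) + 1) / 2 = n := by omega
      have hent : stretchEntry n (i/(2*n)+1) (i%(2*n)+1) =
          (((2 * ((i/(2*n))+1) : ℕ) : ZMod n), 0) := by
        rw [stretchEntry, if_pos (by omega)]
      rw [hd1, hm1, hent, e1, e2]
      have c1 : ((n - 1 : ℕ) : ZMod n) = -1 := by
        rw [Nat.cast_sub (by omega), ZMod.natCast_self, Nat.cast_one]; ring
      rw [Prod.mk_add_mk, Prod.mk.injEq, c1]
      constructor
      · push_cast [ZMod.natCast_self]; ring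
      · push_cast [ZMod.natCast_self]; ring
    · -- i % (2n) + 1 < 2n
      have hi1 : i + 1 = 2*n*(i/(2*n)) + (i % (2*n) + 1) := by omega
      have hd1 : (i+1)/(2*n) = i/(2*n) := by
        rw [hi1, Nat.mul_add_div h2n, Nat.div_eq_of_lt hlt, add_zero]
      have hm1 : (i+1) % (2*n) = i % (2*n) + 1 := by
        rw [hi1, Nat.mul_add_mod, Nat.mod_eq_of_lt hlt]
      rw [hd1, hm1]
      by_cases hpar : i % (2*n) % 2 = 0
      · -- next position odd
        have hent : stretchEntry n (i/(2*n)+1) (i%(2*n)+1) =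
            (0, ((2 * ((i/(2*n))+1) - 1 : ℕ) : ZMod n)) := by
          rw [stretchEntry, if_neg (by omega), if_pos (by omega)]
        have e1 : (i % (2*n) + 1) / 2 = i % (2*n) / 2 := by omega
        have e2 : (i % (2*n) + 1 + 1) / 2 = i % (2*n) / 2 + 1 := by omega
        have e3 : 2 * ((i/(2*n))+1) - 1 = 2 * (i/(2*n)) + 1 := by omega
        rw [hent, e1, e2, e3, Prod.mk_add_mk, Prod.mk.injEq]
        constructor
        · push_cast; ring
        · push_cast; ring
      · -- next position even
        have hent : stretchEntry n (i/(2*n)+1) (i%(2*n)+1) =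
            (((2 * ((i/(2*n))+1) - 1 : ℕ) : ZMod n), 0) := by
          rw [stretchEntry, if_neg (by omega), if_neg (by omega)]
        have e1 : (i % (2*n) + 1) / 2 = i % (2*n) / 2 + 1 := by omega
        have e2 : (i % (2*n) + 1 + 1) / 2 = (i % (2*n) + 1) / 2 := by omega
        have e3 : 2 * ((i/(2*n))+1) - 1 = 2 * (i/(2*n)) + 1 := by omega
        rw [hent, e3, Prod.mk_add_mk, Prod.mk.injEq]
        constructor
        · rw [e1]; push_cast; ring
        · rw [e2, e1]; push_cast; ring

private lemma staircase_key (n : ℕ) (hn : n.Prime) (ho : Odd n)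
    {q1 t1 q2 t2 : ℕ}
    (ht1 : t1 < 2*n) (ht2 : t2 < 2*n)
    (hq1 : 2*q1 + 1 ≤ n) (hq2 : 2*q2 + 1 ≤ n)
    (hv1 : 0 < t1 → 2*q1 + 3 ≤ n) (hv2 : 0 < t2 → 2*q2 + 3 ≤ n)
    (hX : (q1 : ZMod n) + ((t1/2 : ℕ) : ZMod n) * ((2*q1+1 : ℕ) : ZMod n)
        = (q2 : ZMod n) + ((t2/2 : ℕ) : ZMod n) * ((2*q2+1 : ℕ) : ZMod n))
    (hY : (((t1+1)/2 : ℕ) : ZMod n) * ((2*q1+1 : ℕ) : ZMod n)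
        = (((t2+1)/2 : ℕ) : ZMod n) * ((2*q2+1 : ℕ) : ZMod n)) :
    q1 = q2 ∧ t1 = t2 := by
  haveI : Fact n.Prime := ⟨hn⟩
  have hn3 : 3 ≤ n := by
    obtain ⟨r, hr⟩ := ho; have := hn.two_le; omega
  have hYzero : ∀ q t : ℕ, t < 2*n → (0 < t → 2*q + 3 ≤ n) →
      ((((t+1)/2 : ℕ) : ZMod n) * ((2*q+1 : ℕ) : ZMod n) = 0 ↔
        (t = 0 ∨ t = 2*n - 1)) := by
    intro q t ht hv
    constructor
    · intro h
      by_contra hc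
      push_neg at hc
      have h2 := hv (by omega)
      have hd : ((2*q+1 : ℕ) : ZMod n) ≠ 0 := zmodCastNe (by omega) (by omega)
      have hc0 : (((t+1)/2 : ℕ) : ZMod n) = 0 := by
        rcases mul_eq_zero.mp h with h' | h'
        · exact h'
        · exact absurd h' hd
      rw [ZMod.natCast_eq_zero_iff] at hc0
      have := Nat.le_of_dvd (by omega) hc0
      omega
    · rintro (h | h)
      · subst h; norm_num
      · have h2 : (t+1)/2 = n := by omega
        rw [h2, ZMod.natCast_self, zero_mul]
  by_cases hz1 : t1 = 0 ∨ t1 = 2*n - 1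
  · have hy1 : (((t1+1)/2 : ℕ) : ZMod n) * ((2*q1+1 : ℕ) : ZMod n) = 0 :=
      (hYzero q1 t1 ht1 hv1).mpr hz1
    have hy2 : (((t2+1)/2 : ℕ) : ZMod n) * ((2*q2+1 : ℕ) : ZMod n) = 0 := by
      rw [← hY]; exact hy1
    have hz2 : t2 = 0 ∨ t2 = 2*n - 1 := (hYzero q2 t2 ht2 hv2).mp hy2
    have hXval : ∀ q t : ℕ, t < 2*n → 2*q+1 ≤ n → (0 < t → 2*q + 3 ≤ n) →
        (t = 0 ∨ t = 2*n - 1) →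
        (q : ZMod n) + ((t/2 : ℕ) : ZMod n) * ((2*q+1 : ℕ) : ZMod n)
          = ((if t = 0 then q else n - 1 - q : ℕ) : ZMod n) := by
      intro q t ht hq hv h
      rcases h with h | h
      · subst h; simp
      · have h3 := hv (by omega)
        have h2 : t / 2 = n - 1 := by omega
        rw [if_neg (by omega), h2]
        have c1 : ((n - 1 : ℕ) : ZMod n) = -1 := by
          rw [Nat.cast_sub (by omega), ZMod.natCast_self, Nat.cast_one]; ring
        have c2 : ((n - 1 - q : ℕ) : ZMod n) = -1 - q := by
          rw [Nat.cast_sub (by omega : q ≤ n - 1), c1]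
        rw [c1, c2]; push_cast; ring
    rw [hXval q1 t1 ht1 hq1 hv1 hz1, hXval q2 t2 ht2 hq2 hv2 hz2] at hX
    have hlt1 : (if t1 = 0 then q1 else n - 1 - q1) < n := by split_ifs <;> omega
    have hlt2 : (if t2 = 0 then q2 else n - 1 - q2) < n := by split_ifs <;> omega
    have heq := zmodCastInj hlt1 hlt2 hX
    rcases hz1 with z1 | z1 <;> rcases hz2 with z2 | z2
    · rw [if_pos z1, if_pos z2] at heq; omega
    · exfalso
      have h4 := hv2 (by omega)
      rw [if_pos z1, if_neg (by omega)] at heq; omega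
    · exfalso
      have h4 := hv1 (by omega)
      rw [if_neg (by omega), if_pos z2] at heq; omega
    · have h4 := hv1 (by omega)
      have h5 := hv2 (by omega)
      rw [if_neg (by omega), if_neg (by omega)] at heq; omega
  · have hz2 : ¬(t2 = 0 ∨ t2 = 2*n - 1) := by
      intro h
      have hy2 : (((t2+1)/2 : ℕ) : ZMod n) * ((2*q2+1 : ℕ) : ZMod n) = 0 :=
        (hYzero q2 t2 ht2 hv2).mpr h
      have hy1 : (((t1+1)/2 : ℕ) : ZMod n) * ((2*q1+1 : ℕ) : ZMod n) = 0 := by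
        rw [hY]; exact hy2
      exact hz1 ((hYzero q1 t1 ht1 hv1).mp hy1)
    push_neg at hz1 hz2
    have hw1 := hv1 (by omega)
    have hw2 := hv2 (by omega)
    have hsub : (((t1+1)/2 : ℕ) : ZMod n) * ((2*q1+1 : ℕ) : ZMod n)
          - ((q1 : ZMod n) + ((t1/2 : ℕ) : ZMod n) * ((2*q1+1 : ℕ) : ZMod n))
        = (((t2+1)/2 : ℕ) : ZMod n) * ((2*q2+1 : ℕ) : ZMod n)
          - ((q2 : ZMod n) + ((t2/2 : ℕ) : ZMod n) * ((2*q2+1 : ℕ) : ZMod n)) := by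
      rw [hX, hY]
    have hEo : ∀ q t : ℕ, t % 2 = 1 →
        (((t+1)/2 : ℕ) : ZMod n) * ((2*q+1 : ℕ) : ZMod n)
          - ((q : ZMod n) + ((t/2 : ℕ) : ZMod n) * ((2*q+1 : ℕ) : ZMod n))
        = ((q+1 : ℕ) : ZMod n) := by
      intro q t hodd
      have h1 : (t+1)/2 = t/2 + 1 := by omega
      rw [h1]; push_cast; ring
    have hEe : ∀ q t : ℕ, t % 2 = 0 →
        (((t+1)/2 : ℕ) : ZMod n) * ((2*q+1 : ℕ) : ZMod n)
          - ((q : ZMod n) + ((t/2 : ℕ) : ZMod n) * ((2*q+1 : ℕ) : ZMod n))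
        = -(q : ZMod n) := by
      intro q t hev
      have h1 : (t+1)/2 = t/2 := by omega
      rw [h1]; push_cast; ring
    have hdne : ((2*q1+1 : ℕ) : ZMod n) ≠ 0 := zmodCastNe (by omega) (by omega)
    by_cases p1 : t1 % 2 = 1 <;> by_cases p2 : t2 % 2 = 1
    · rw [hEo q1 t1 p1, hEo q2 t2 p2] at hsub
      have hq : q1 = q2 := by
        have := zmodCastInj (a := q1+1) (b := q2+1) (by omega) (by omega) hsub
        omega
      subst hq
      have hc := mul_right_cancel₀ hdne hY
      have := zmodCastInj (a := (t1+1)/2) (b := (t2+1)/2) (by omega) (by omega) hc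
      exact ⟨rfl, by omega⟩
    · exfalso
      rw [hEo q1 t1 p1, hEe q2 t2 (by omega)] at hsub
      have hzero : ((q1 + 1 + q2 : ℕ) : ZMod n) = 0 := by
        push_cast at hsub ⊢; linear_combination hsub
      exact zmodCastNe (by omega) (by omega) hzero
    · exfalso
      rw [hEe q1 t1 (by omega), hEo q2 t2 p2] at hsub
      have hzero : ((q2 + 1 + q1 : ℕ) : ZMod n) = 0 := by
        push_cast at hsub ⊢; linear_combination -hsub
      exact zmodCastNe (by omega) (by omega) hzero
    · rw [hEe q1 t1 (by omega), hEe q2 t2 (by omega)] at hsub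
      have hq : q1 = q2 := by
        have := zmodCastInj (a := q1) (b := q2) (by omega) (by omega) (neg_inj.mp hsub)
        omega
      subst hq
      have hc := mul_right_cancel₀ hdne hY
      have := zmodCastInj (a := (t1+1)/2) (b := (t2+1)/2) (by omega) (by omega) hc
      exact ⟨rfl, by omega⟩

/-- For `n` an odd prime, every nonempty consecutive partial sum of the staircase
array is nonzero in `ZMod n × ZMod n`; consequently the walk starting at any vertex
`v₀` of `K_n □ K_n` with the staircase array as step array is a path of length
`n(n-1)`: consecutive vertices are adjacent and all vertices are distinct. -/
theorem staircase_walk_is_path (n : ℕ) (hn : n.Prime) (ho : Odd n) :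
    (∀ i j, i < j → j ≤ n * (n - 1) →
      ∑ g ∈ Icc (i + 1) j, staircase n g ≠ 0) ∧
    (∀ v₀ : ZMod n × ZMod n, ∀ i, i < n * (n - 1) →
      (rook n n).Adj (v₀ + ∑ g ∈ Icc 1 i, staircase n g)
        (v₀ + ∑ g ∈ Icc 1 (i + 1), staircase n g)) ∧
    (∀ v₀ : ZMod n × ZMod n, ∀ i j, i ≤ n * (n - 1) → j ≤ n * (n - 1) →
      v₀ + ∑ g ∈ Icc 1 i, staircase n g = v₀ + ∑ g ∈ Icc 1 j, staircase n g →
      i = j) := by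
  obtain ⟨r, hr⟩ := ho
  have hn3 : 3 ≤ n := by have := hn.two_le; omega
  have h2n : 0 < 2*n := by omega
  have hN : n * (n - 1) = 2*n*r := by
    have h1 : n - 1 = 2*r := by omega
    rw [h1, hr]; ring
  have hP := staircase_prefix' n hn3
  have hqle : ∀ m, m ≤ n*(n-1) → m/(2*n) ≤ r := by
    intro m hm
    have h1 : m/(2*n) ≤ (n*(n-1))/(2*n) := Nat.div_le_div_right hm
    rwa [hN, Nat.mul_div_cancel_left _ h2n] at h1
  have hstrict : ∀ m, m ≤ n*(n-1) → 0 < m % (2*n) → m/(2*n) < r := by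
    intro m hm h0
    rcases Nat.lt_or_ge (m/(2*n)) r with h | h
    · exact h
    · exfalso
      have heq : m/(2*n) = r := le_antisymm (hqle m hm) h
      have hdm := Nat.div_add_mod m (2*n)
      rw [heq] at hdm
      rw [hN] at hm
      omega
  have inj : ∀ i j, i ≤ n*(n-1) → j ≤ n*(n-1) →
      (∑ g ∈ Icc 1 i, staircase n g) = (∑ g ∈ Icc 1 j, staircase n g) → i = j := by
    intro i j hi hj hS
    rw [hP i hi, hP j hj, Prod.mk.injEq] at hS
    obtain ⟨hX, hY⟩ := hS
    have hk := staircase_key n hn ⟨r, hr⟩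
      (Nat.mod_lt i h2n) (Nat.mod_lt j h2n)
      (by have := hqle i hi; omega) (by have := hqle j hj; omega)
      (fun h0 => by have := hstrict i hi h0; omega)
      (fun h0 => by have := hstrict j hj h0; omega)
      hX hY
    obtain ⟨hq, ht⟩ := hk
    calc i = 2*n*(i/(2*n)) + i % (2*n) := (Nat.div_add_mod i (2*n)).symm
    _ = 2*n*(j/(2*n)) + j % (2*n) := by rw [hq, ht]
    _ = j := Nat.div_add_mod j (2*n)
  have hIcc : ∀ a m : ℕ, Icc (a+1) m = Ioc a m := by
    intro a m; ext x; simp [Finset.mem_Icc, Finset.mem_Ioc]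
  refine ⟨?_, ?_, ?_⟩
  · intro i j hij hj h0
    have hsplit : (∑ g ∈ Icc 1 i, staircase n g) + (∑ g ∈ Icc (i+1) j, staircase n g)
        = ∑ g ∈ Icc 1 j, staircase n g := by
      rw [show (1:ℕ) = 0 + 1 from rfl, hIcc, hIcc, hIcc]
      exact Finset.sum_Ioc_consecutive _ (Nat.zero_le i) (le_of_lt hij)
    rw [h0, add_zero] at hsplit
    exact absurd (inj i j (by omega) hj hsplit) (by omega)
  · intro v₀ i hi
    have hi' : i ≤ n*(n-1) := le_of_lt hi
    have hqlt : i/(2*n) < r := by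
      have : i < r * (2*n) := by rw [mul_comm, ← hN]; exact hi
      exact (Nat.div_lt_iff_lt_mul h2n).mpr this
    rw [Finset.sum_Icc_succ_top (by omega : 1 ≤ i+1), ← add_assoc]
    have hstep : staircase n (i+1) = stretchEntry n (i/(2*n)+1) (i%(2*n)+1) := by
      simp [staircase]
    obtain ⟨q, hgq⟩ : ∃ x, i/(2*n) = x := ⟨_, rfl⟩
    obtain ⟨t, hgt⟩ : ∃ x, i%(2*n) = x := ⟨_, rfl⟩
    rw [hgq] at hstep hqlt
    rw [hgt] at hstep
    have hcase : ((staircase n (i+1)).1 = 0 ∧ (staircase n (i+1)).2 ≠ 0)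
        ∨ ((staircase n (i+1)).2 = 0 ∧ (staircase n (i+1)).1 ≠ 0) := by
      rw [hstep]
      unfold stretchEntry
      split_ifs with h1 h2
      · right
        refine ⟨rfl, zmodCastNe (by omega) (by omega)⟩
      · left
        refine ⟨rfl, zmodCastNe (by omega) (by omega)⟩
      · right
        refine ⟨rfl, zmodCastNe (by omega) (by omega)⟩
    set u := v₀ + ∑ g ∈ Icc 1 i, staircase n g with hu
    set e := staircase n (i+1) with he
    have hne : u ≠ u + e := by
      intro hEq
      have h0 : e = 0 := by
        have := hEq.symm
        rwa [add_eq_left] at this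
      rcases hcase with ⟨_, h2⟩ | ⟨_, h2⟩
      · exact h2 (by rw [h0]; rfl)
      · exact h2 (by rw [h0]; rfl)
    refine ⟨hne, ?_⟩
    rcases hcase with ⟨h1, _⟩ | ⟨h1, _⟩
    · left; show u.1 = u.1 + e.1; rw [h1, add_zero]
    · right; show u.2 = u.2 + e.2; rw [h1, add_zero]
  · intro v₀ i j hi hj h
    exact inj i j hi hj (add_left_cancel h)
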